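/- Let d_1, …, d_m ∈ ℂ^n, let S ⊆ {1,…,m} be nonempty, and let A be the n×|S| complex matrix whose columns are the vectors d_j for j ∈ S. Suppose X is an |S|×n complex matrix satisfying A·X·A = A and (A·X)^H = A·X. Let η ∈ (0,1), let r ∈ ℂ^n be a nonzero vector in the column space of A, and suppose that ‖X d_j‖_1 < 1 − η for every j ∉ S. Let ε ≥ 0 satisfy ε ≤ (η/2)·max_{j∈S} |⟨d_j, r⟩|, and let z : {1,…,m} → ℝ satisfy |z_j − |⟨d_j, r⟩|| ≤ ε for all j ∈ {1,…,m}. Then every index j* attaining max_{j∈{1,…,m}} z_j belongs to S. -/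

import Mathlib

open Matrix

/-- Single-iteration exact recovery for QOMP (Theorem "Exact Recovery for QOMP"):
under the η-strengthened exact recovery condition `‖X d_j‖₁ < 1 - η` for all `j ∉ S`
(where `X` is a pseudoinverse-like matrix for the subdictionary `A` whose columns
are `d_j`, `j ∈ S`), greedy selection based on ε-accurate estimates `z` of the
correlations `|⟨d_j, r⟩|` always picks an atom from the optimal support `S`. -/
theorem qomp_exact_recovery_step {n m : ℕ}
    (d : Fin m → EuclideanSpace ℂ (Fin n))
    (S : Finset (Fin m)) (hS : S.Nonempty)
    (A : Matrix (Fin n) {j : Fin m // j ∈ S} ℂ)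
    (hA : ∀ (i : Fin n) (j : {j : Fin m // j ∈ S}), A i j = d j.1 i)
    (X : Matrix {j : Fin m // j ∈ S} (Fin n) ℂ)
    (hAXA : A * X * A = A) (hherm : (A * X)ᴴ = A * X)
    (η : ℝ) (hη : η ∈ Set.Ioo (0 : ℝ) 1)
    (r : EuclideanSpace ℂ (Fin n)) (hr0 : r ≠ 0)
    (hrcol : ∃ v : {j : Fin m // j ∈ S} → ℂ, (show EuclideanSpace ℂ (Fin n) from WithLp.toLp 2 (A.mulVec v)) = r)
    (hERC : ∀ j : Fin m, j ∉ S → ∑ i, ‖X.mulVec (d j) i‖ < 1 - η)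
    (ε : ℝ) (hε0 : 0 ≤ ε)
    (hε : ε ≤ (η / 2) * S.sup' hS (fun j => ‖(inner ℂ (d j) r : ℂ)‖))
    (z : Fin m → ℝ)
    (hz : ∀ j : Fin m, |z j - ‖(inner ℂ (d j) r : ℂ)‖| ≤ ε)
    (jstar : Fin m) (hjstar : ∀ j : Fin m, z j ≤ z jstar) :
    jstar ∈ S := by
  classical
  obtain ⟨v, hv⟩ := hrcol
  set F : Fin m → ℝ := fun j => ‖(inner ℂ (d j) r : ℂ)‖ with hFdef
  set M : ℝ := S.sup' hS F with hMdef
  have inner_eq : ∀ x y : EuclideanSpace ℂ (Fin n),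
      (inner ℂ x y : ℂ) = star (x : Fin n → ℂ) ⬝ᵥ (y : Fin n → ℂ) := by
    intro x y
    simp [PiLp.inner_apply, RCLike.inner_apply, dotProduct, Pi.star_apply, mul_comm]
  -- key expansion: inner ℂ (A c) r = ∑ conj (c k) * inner ℂ (d k) r
  have key : ∀ c : {j : Fin m // j ∈ S} → ℂ,
      (inner ℂ (show EuclideanSpace ℂ (Fin n) from WithLp.toLp 2 (A.mulVec c)) r : ℂ)
        = ∑ k : {j : Fin m // j ∈ S}, (starRingEnd ℂ) (c k) * (inner ℂ (d k.1) r : ℂ) := by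
    intro c
    simp only [inner_eq]
    simp only [dotProduct, Matrix.mulVec, Pi.star_apply, hA, star_sum, star_mul',
      Finset.sum_mul, Finset.mul_sum]
    rw [Finset.sum_comm]
    apply Finset.sum_congr rfl
    intro k _
    apply Finset.sum_congr rfl
    intro i _
    simp only [starRingEnd_apply]
    ring
  have hMk : ∀ k : Fin m, k ∈ S → F k ≤ M := fun k hk => Finset.le_sup' F hk
  have hMnonneg : 0 ≤ M := le_trans (norm_nonneg _) (hMk _ hS.choose_spec)
  have hMpos : 0 < M := by
    rcases hMnonneg.lt_or_eq with h | h
    · exact h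
    · exfalso
      have hall : ∀ k : {j : Fin m // j ∈ S}, (inner ℂ (d k.1) r : ℂ) = 0 := by
        intro k
        have h1 : F k.1 ≤ 0 := h ▸ hMk k.1 k.2
        exact norm_eq_zero.mp (le_antisymm h1 (norm_nonneg _))
      have hrr : (inner ℂ r r : ℂ) = 0 := by
        have hk := key v
        rw [hv] at hk
        rw [hk]
        simp [hall]
      exact hr0 (inner_self_eq_zero.mp hrr)
  by_contra hjS
  -- projection identity for jstar
  set c : {j : Fin m // j ∈ S} → ℂ := X.mulVec (d jstar) with hc
  have hproj : (inner ℂ (d jstar) r : ℂ)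
      = ∑ k : {j : Fin m // j ∈ S}, (starRingEnd ℂ) (c k) * (inner ℂ (d k.1) r : ℂ) := by
    rw [← key, inner_eq, inner_eq]
    conv_lhs => rw [← hv]
    conv_rhs => rw [← hv]
    show star (d jstar : Fin n → ℂ) ⬝ᵥ (A.mulVec v) = star (A.mulVec c) ⬝ᵥ (A.mulVec v)
    rw [hc, Matrix.mulVec_mulVec, Matrix.star_mulVec, hherm,
      ← Matrix.dotProduct_mulVec, Matrix.mulVec_mulVec, hAXA]
  -- bound F jstar < (1 - η) * M
  have hbound : F jstar < (1 - η) * M := by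
    have h1 : F jstar ≤ ∑ k : {j : Fin m // j ∈ S}, ‖c k‖ * F k := by
      rw [hFdef]
      simp only
      rw [hproj]
      refine le_trans (norm_sum_le _ _) ?_
      apply Finset.sum_le_sum
      intro k _
      rw [norm_mul, RCLike.norm_conj]
    have h2 : ∑ k : {j : Fin m // j ∈ S}, ‖c k‖ * F k
        ≤ (∑ k : {j : Fin m // j ∈ S}, ‖c k‖) * M := by
      rw [Finset.sum_mul]
      apply Finset.sum_le_sum
      intro k _
      exact mul_le_mul_of_nonneg_left (hMk k.1 k.2) (norm_nonneg _)
    have h3 : (∑ k : {j : Fin m // j ∈ S}, ‖c k‖) * M < (1 - η) * M :=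
      mul_lt_mul_of_pos_right (hERC jstar hjS) hMpos
    exact lt_of_le_of_lt (le_trans h1 h2) h3
  -- pick maximizer in S
  obtain ⟨k0, hk0S, hk0⟩ := Finset.exists_mem_eq_sup' hS F
  rw [← hMdef] at hk0
  have hzk0 : M - ε ≤ z k0 := by
    have h := abs_le.mp (hz k0)
    have hFk0 : F k0 = ‖(inner ℂ (d k0) r : ℂ)‖ := rfl
    linarith [h.1, h.2, hk0.symm.le, hk0.le]
  have hzj : z jstar ≤ F jstar + ε := by
    have h := abs_le.mp (hz jstar)
    linarith [h.1, h.2]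
  have h2ε : 2 * ε ≤ η * M := by linarith
  have := hjstar k0
  nlinarith [hbound, hzk0, hzj, hMpos]
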